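/- Let λ₀ ≥ ε ≥ 0, d > 0, and let n be a positive integer. Define λ(t) = λ₀ + ε cos(2πnt/d) and the constant function A(t) = (1 + λ₀ d)^{−1}. Then 1 = ∫_{t-d}^{t} λ(s)A(s) ds + A(t) for all t ∈ ℝ; consequently the output rate ν(t) = λ(t)A(t) = λ(t)/(1 + λ₀ d) is proportional to the input rate. -/

import Mathlib

/-- for the cosine-modulated input `lam(t) = lam₀ + ε cos(2πn t/d)`
whose frequency `n/d` is an integer multiple of the inverse dead-time, the constant
active fraction `A(t) = (1 + lam₀ d)⁻¹` satisfies the normalization condition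
`1 = ∫_{t-d}^t lam(s)A(s) ds + A(t)`, and consequently the output rate
`ν(t) = lam(t)A(t) = lam(t)/(1 + lam₀ d)` is proportional to the input rate. -/
theorem stmt_9 (lam0 ε d : ℝ) (hε : 0 ≤ ε) (hlam0 : ε ≤ lam0) (hd : 0 < d)
    (n : ℕ) (hn : 0 < n)
    (lam A : ℝ → ℝ)
    (hlam : ∀ t : ℝ, lam t = lam0 + ε * Real.cos (2 * Real.pi * (n : ℝ) * t / d))
    (hA : ∀ t : ℝ, A t = (1 + lam0 * d)⁻¹) :
    (∀ t : ℝ, 1 = (∫ s in (t - d)..t, lam s * A s) + A t) ∧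
    (∀ t : ℝ, lam t * A t = lam t / (1 + lam0 * d)) := by
  have hpos : (0:ℝ) < 1 + lam0 * d := by nlinarith
  set c : ℝ := 2 * Real.pi * (n : ℝ) / d with hcdef
  have hc : c ≠ 0 := by
    have := Real.pi_pos
    rw [hcdef]; positivity
  constructor
  · intro t
    have hint : (∫ s in (t - d)..t, lam s * A s)
        = (∫ s in (t - d)..t, (lam0 + ε * Real.cos (c * s))) * (1 + lam0 * d)⁻¹ := by
      rw [← intervalIntegral.integral_mul_const]
      apply intervalIntegral.integral_congr
      intro s _
      simp only [hlam s, hA s, hcdef]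
      ring_nf
    rw [hint, hA t]
    have hcont : Continuous fun s : ℝ => Real.cos (c * s) :=
      Real.continuous_cos.comp (continuous_const.mul continuous_id)
    have h2 : (∫ s in (t - d)..t, Real.cos (c * s)) = 0 := by
      have := intervalIntegral.integral_comp_mul_left (a := t - d) (b := t)
        (fun x => Real.cos x) hc
      rw [this, integral_cos]
      have heq : c * (t - d) = c * t - (n : ℝ) * (2 * Real.pi) := by
        rw [hcdef]; field_simp; try ring
      rw [heq, Real.sin_sub_nat_mul_two_pi]
      simp
    have h1 : (∫ s in (t - d)..t, (lam0 + ε * Real.cos (c * s))) = lam0 * d := by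
      rw [intervalIntegral.integral_add (f := fun _ => lam0) (g := fun s => ε * Real.cos (c * s)) intervalIntegrable_const
        ((continuous_const.mul hcont).intervalIntegrable _ _),
        intervalIntegral.integral_const, intervalIntegral.integral_const_mul, h2]
      simp; ring
    rw [h1]
    field_simp; ring
  · intro t
    rw [hA t, div_eq_mul_inv]
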